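/- Let ℓ ∈ ℤ and consider indices in Fin 6 × Bool (crossings 1,…,6 at levels 0,1, written i^0, i^1). Suppose L : (Fin 6 × Bool) → (Fin 6 × Bool) → ℤ is symmetric, and the only nonzero values are L(1^1, 6^1) = L(2^0, 5^0) = L(1^0, 4^0) = L(2^1, 3^1) = L(3^0, 6^0) = L(4^1, 5^1) = ℓ (and symmetrically). If H : Set (Fin 6) → ℤ satisfies the crossing-change formula 2(H(∅) − H(S)) = Σ_{x < y, exactly one of x.1, y.1 ∈ S} (−1)^{ε(x)+ε(y)} L(x,y) for all S, and H({0}) = 0 (crossing change at the first crossing unknots), then H(∅) = ℓ. -/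

import Mathlib

open Finset

/-- Lexicographic order on `Fin 6 × Bool` with `false < true`. -/
def lexLt (x y : Fin 6 × Bool) : Prop :=
  x.1 < y.1 ∨ (x.1 = y.1 ∧ x.2 = false ∧ y.2 = true)

instance (x y : Fin 6 × Bool) : Decidable (lexLt x y) := by
  unfold lexLt; infer_instance

/-- `ε(i,b) = if b then 1 else 0`. -/
def eps (x : Fin 6 × Bool) : ℕ := if x.2 then 1 else 0

lemma pair_mem_of_pair_eq {x y u v : Fin 6 × Bool}
    (h : ({x, y} : Finset (Fin 6 × Bool)) = {u, v}) :
    (x = u ∨ x = v) ∧ (y = u ∨ y = v) := by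
  constructor
  · have hx : x ∈ ({u, v} : Finset (Fin 6 × Bool)) := h ▸ (by simp)
    simpa using hx
  · have hy : y ∈ ({u, v} : Finset (Fin 6 × Bool)) := h ▸ (by simp)
    simpa using hy

/-- The crossings `1,…,6` of the paper are indexed here by `0,…,5 : Fin 6`,
and the level `ε ∈ {0,1}` by `false, true`. -/
theorem stmt8 (ℓ : ℤ) (L : (Fin 6 × Bool) → (Fin 6 × Bool) → ℤ)
    (hsymm : ∀ x y, L x y = L y x)
    (h16 : L (0, true) (5, true) = ℓ)
    (h25 : L (1, false) (4, false) = ℓ)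
    (h14 : L (0, false) (3, false) = ℓ)
    (h23 : L (1, true) (2, true) = ℓ)
    (h36 : L (2, false) (5, false) = ℓ)
    (h45 : L (3, true) (4, true) = ℓ)
    (hzero : ∀ x y : Fin 6 × Bool, L x y ≠ 0 →
      ({x, y} : Finset (Fin 6 × Bool)) = {(0, true), (5, true)} ∨
      ({x, y} : Finset (Fin 6 × Bool)) = {(1, false), (4, false)} ∨
      ({x, y} : Finset (Fin 6 × Bool)) = {(0, false), (3, false)} ∨
      ({x, y} : Finset (Fin 6 × Bool)) = {(1, true), (2, true)} ∨
      ({x, y} : Finset (Fin 6 × Bool)) = {(2, false), (5, false)} ∨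
      ({x, y} : Finset (Fin 6 × Bool)) = {(3, true), (4, true)})
    (H : Finset (Fin 6) → ℤ)
    (hH : ∀ S : Finset (Fin 6),
      2 * (H ∅ - H S) = ∑ p ∈ Finset.univ.filter
        (fun p : (Fin 6 × Bool) × (Fin 6 × Bool) =>
          lexLt p.1 p.2 ∧ Xor (p.1.1 ∈ S) (p.2.1 ∈ S)),
        (-1 : ℤ) ^ (eps p.1 + eps p.2) * L p.1 p.2)
    (hunknot : H {0} = 0) :
    H ∅ = ℓ := by
  have h := hH {0}
  rw [hunknot, sub_zero] at h
  set f : (Fin 6 × Bool) × (Fin 6 × Bool) → ℤ :=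
    fun p => (-1 : ℤ) ^ (eps p.1 + eps p.2) * L p.1 p.2 with hf
  set a : (Fin 6 × Bool) × (Fin 6 × Bool) := (((0 : Fin 6), false), ((3 : Fin 6), false)) with ha
  set b : (Fin 6 × Bool) × (Fin 6 × Bool) := (((0 : Fin 6), true), ((5 : Fin 6), true)) with hb
  set T := Finset.univ.filter
      (fun p : (Fin 6 × Bool) × (Fin 6 × Bool) =>
        lexLt p.1 p.2 ∧ Xor (p.1.1 ∈ ({0} : Finset (Fin 6))) (p.2.1 ∈ ({0} : Finset (Fin 6)))) with hT
  have hsub : ({a, b} : Finset ((Fin 6 × Bool) × (Fin 6 × Bool))) ⊆ T := by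
    intro p hp
    simp only [Finset.mem_insert, Finset.mem_singleton] at hp
    rcases hp with rfl | rfl <;> simp [hT, ha, hb, lexLt, Xor] <;> decide
  have hvan : ∀ p ∈ T, p ∉ ({a, b} : Finset ((Fin 6 × Bool) × (Fin 6 × Bool))) → f p = 0 := by
    intro p hpT hpab
    simp only [hT, Finset.mem_filter, Finset.mem_univ, true_and] at hpT
    obtain ⟨hlex, hxor⟩ := hpT
    by_contra hne
    have hLne : L p.1 p.2 ≠ 0 := by
      intro h0; apply hne; simp [hf, h0]
    have hmem := hzero p.1 p.2 hLne
    simp only [Finset.mem_insert, Finset.mem_singleton, not_or] at hpab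
    obtain ⟨hpa, hpb⟩ := hpab
    rcases hmem with h | h | h | h | h | h <;>
      obtain ⟨hx, hy⟩ := pair_mem_of_pair_eq h <;>
      obtain ⟨x1, x2⟩ := p <;>
      rcases hx with rfl | rfl <;> rcases hy with rfl | rfl <;>
      first
        | (exact hpa rfl)
        | (exact hpb rfl)
        | (revert hlex hxor; decide)
  have hsum : ∑ p ∈ T, f p = f a + f b := by
    rw [← Finset.sum_subset hsub hvan]
    rw [Finset.sum_pair (by decide : a ≠ b)]
  have hfa : f a = ℓ := by simp [hf, ha, eps, h14]
  have hfb : f b = ℓ := by simp [hf, hb, eps, h16]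
  rw [hsum, hfa, hfb] at h
  linarith
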